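/- Let f : ℝⁿ → ℝ be Lipschitz with constant L and supported in a set of finite Lebesgue measure M. Then for every λ > 0 and p ∈ [1,∞), λ^p · m⊗m({(x,y) : |f(x)-f(y)| > λ|x-y| m(B(x,|x-y|))^{1/p}}) ≤ 2 M L^p, where m is Lebesgue measure on ℝⁿ. -/

import Mathlib

open Metric MeasureTheory

/-- BVY weak-type bound for Lipschitz functions with support of finite measure. -/
theorem bvy_weak_bound (n : ℕ) (hn : 1 ≤ n)
    (f : EuclideanSpace ℝ (Fin n) → ℝ) (L : ℝ) (hL : 0 < L)
    (hf : ∀ a b, |f a - f b| ≤ L * dist a b)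
    (S : Set (EuclideanSpace ℝ (Fin n))) (M : ℝ)
    (hsupp : Function.support f ⊆ S) (hS : volume S = ENNReal.ofReal M)
    (p : ℝ) (hp : 1 ≤ p) (lam : ℝ) (hlam : 0 < lam) :
    ENNReal.ofReal (lam ^ p) *
      (volume.prod volume)
        {q : EuclideanSpace ℝ (Fin n) × EuclideanSpace ℝ (Fin n) |
          |f q.1 - f q.2| >
            lam * dist q.1 q.2 * (volume (ball q.1 (dist q.1 q.2))).toReal ^ (1 / p)}
      ≤ ENNReal.ofReal (2 * M * L ^ p) := by
  haveI : Nonempty (Fin n) := Fin.pos_iff_nonempty.mp hn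
  haveI : Nontrivial (EuclideanSpace ℝ (Fin n)) :=
    inferInstanceAs (Nontrivial (PiLp 2 fun _ : Fin n => ℝ))
  have hp0 : p ≠ 0 := by positivity
  set V : ENNReal := volume (ball (0 : EuclideanSpace ℝ (Fin n)) 1) with hVdef
  have hball0 : ∀ (z : EuclideanSpace ℝ (Fin n)) (r : ℝ), 0 ≤ r →
      volume (ball z r) = ENNReal.ofReal (r ^ n) * V := by
    intro z r hr
    rw [Measure.addHaar_ball volume z hr, finrank_euclideanSpace_fin]
  have hV0 : V ≠ 0 := (measure_ball_pos _ _ one_pos).ne'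
  have hVt : V ≠ ⊤ := measure_ball_lt_top.ne
  have hVr : 0 < V.toReal := ENNReal.toReal_pos hV0 hVt
  set c : ℝ := (L / lam) ^ p with hcdef
  have hc0 : 0 < c := Real.rpow_pos_of_pos (div_pos hL hlam) p
  set R : ℝ := (c / V.toReal) ^ ((n : ℝ)⁻¹) with hRdef
  have hR0 : 0 ≤ R := Real.rpow_nonneg (by positivity) _
  have hRn : R ^ n = c / V.toReal := by
    rw [hRdef, ← Real.rpow_natCast ((c / V.toReal) ^ ((n:ℝ)⁻¹)) n,
      ← Real.rpow_mul (by positivity),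
      inv_mul_cancel₀ (by exact_mod_cast (Nat.pos_of_ne_zero (by omega)).ne'),
      Real.rpow_one]
  have hballR : ∀ z : EuclideanSpace ℝ (Fin n), volume (ball z R) = ENNReal.ofReal c := by
    intro z
    rw [hball0 z R hR0, hRn, ENNReal.ofReal_div_of_pos hVr, ENNReal.ofReal_toReal hVt,
      ENNReal.div_mul_cancel hV0 hVt]
  -- the measurable hull of S
  set S' : Set (EuclideanSpace ℝ (Fin n)) := toMeasurable volume S with hS'def
  have hS'meas : MeasurableSet S' := measurableSet_toMeasurable _ _
  have hS'vol : volume S' = ENNReal.ofReal M := by rw [hS'def, measure_toMeasurable, hS]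
  have hSsub : S ⊆ S' := subset_toMeasurable _ _
  -- the distance set
  set D : Set (EuclideanSpace ℝ (Fin n) × EuclideanSpace ℝ (Fin n)) :=
    {q | dist q.1 q.2 < R} with hDdef
  have hDmeas : MeasurableSet D :=
    (isOpen_lt (by fun_prop) continuous_const).measurableSet
  set A : Set (EuclideanSpace ℝ (Fin n) × EuclideanSpace ℝ (Fin n)) := {q |
      |f q.1 - f q.2| >
        lam * dist q.1 q.2 * (volume (ball q.1 (dist q.1 q.2))).toReal ^ (1 / p)} with hAdef
  -- key inclusion
  have hsub : A ⊆ ((S' ×ˢ Set.univ) ∩ D) ∪ ((Set.univ ×ˢ S') ∩ D) := by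
    rintro ⟨x, y⟩ hq
    simp only [hAdef, Set.mem_setOf_eq] at hq
    set d : ℝ := dist x y with hddef
    set t : ℝ := (volume (ball x d)).toReal with htdef
    have ht0 : 0 ≤ t := ENNReal.toReal_nonneg
    have habs : 0 ≤ lam * d * t ^ (1/p) :=
      mul_nonneg (mul_nonneg hlam.le dist_nonneg) (Real.rpow_nonneg ht0 _)
    have hd0 : 0 < d := by
      rcases eq_or_lt_of_le (dist_nonneg : (0:ℝ) ≤ dist x y) with h | h
      · exfalso
        have hxy : x = y := dist_eq_zero.mp h.symm
        have h0 : |f x - f y| = 0 := by rw [hxy, sub_self, abs_zero]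
        linarith [hq, habs, h0.ge, h0.le]
      · exact h
    have hfd : lam * d * t ^ (1/p) < L * d := lt_of_lt_of_le hq (hf x y)
    have h1 : lam * t ^ (1/p) < L := by nlinarith [hfd, hd0]
    have h2 : t ^ (1/p) < L / lam := (lt_div_iff₀ hlam).mpr (by nlinarith [h1])
    have h3 : t < c := by
      have := Real.rpow_lt_rpow (Real.rpow_nonneg ht0 _) h2 (lt_of_lt_of_le one_pos hp)
      rwa [← Real.rpow_mul ht0, one_div, inv_mul_cancel₀ hp0, Real.rpow_one] at this
    have ht : t = d ^ n * V.toReal := by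
      rw [htdef, hball0 x d hd0.le, ENNReal.toReal_mul, ENNReal.toReal_ofReal (by positivity)]
    have hdn : d ^ n < R ^ n := by
      rw [hRn, lt_div_iff₀ hVr]; rw [ht] at h3; linarith
    have hdR : d < R := lt_of_pow_lt_pow_left₀ n hR0 hdn
    have hfx : f x ≠ f y := by
      intro h
      rw [h, sub_self, abs_zero] at hq
      linarith [hq, habs]
    have hmem : x ∈ S' ∨ y ∈ S' := by
      rcases ne_or_eq (f x) 0 with h | h
      · exact Or.inl (hSsub (hsupp h))
      · have hy : f y ≠ 0 := by
          rw [h] at hfx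
          exact fun h' => hfx h'.symm
        exact Or.inr (hSsub (hsupp hy))
    rcases hmem with h | h
    · exact Or.inl ⟨⟨h, Set.mem_univ _⟩, hdR⟩
    · exact Or.inr ⟨⟨Set.mem_univ _, h⟩, hdR⟩
  -- measures of the two pieces
  have hB1 : (volume.prod volume) ((S' ×ˢ Set.univ) ∩ D) ≤ ENNReal.ofReal c * ENNReal.ofReal M := by
    rw [Measure.prod_apply ((hS'meas.prod MeasurableSet.univ).inter hDmeas)]
    have heq : ∀ x : EuclideanSpace ℝ (Fin n),
        volume (Prod.mk x ⁻¹' ((S' ×ˢ Set.univ) ∩ D)) =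
        S'.indicator (fun _ => ENNReal.ofReal c) x := by
      intro x
      by_cases hx : x ∈ S'
      · have : Prod.mk x ⁻¹' ((S' ×ˢ Set.univ) ∩ D) = ball x R := by
          ext y; simp [hx, hDdef, mem_ball, dist_comm y x]
        rw [this, hballR, Set.indicator_of_mem hx]
      · have : Prod.mk x ⁻¹' ((S' ×ˢ Set.univ) ∩ D) = ∅ := by
          ext y; simp [hx, hDdef]
        rw [this, measure_empty, Set.indicator_of_notMem hx]
    rw [lintegral_congr heq, lintegral_indicator hS'meas, setLIntegral_const, hS'vol]
  have hB2 : (volume.prod volume) ((Set.univ ×ˢ S') ∩ D) ≤ ENNReal.ofReal c * ENNReal.ofReal M := by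
    rw [Measure.prod_apply_symm ((MeasurableSet.univ.prod hS'meas).inter hDmeas)]
    have heq : ∀ y : EuclideanSpace ℝ (Fin n),
        volume ((fun x => (x, y)) ⁻¹' ((Set.univ ×ˢ S') ∩ D)) =
        S'.indicator (fun _ => ENNReal.ofReal c) y := by
      intro y
      by_cases hy : y ∈ S'
      · have : (fun x => (x, y)) ⁻¹' ((Set.univ ×ˢ S') ∩ D) = ball y R := by
          ext x; simp [hy, hDdef, mem_ball, dist_comm x y]
        rw [this, hballR, Set.indicator_of_mem hy]
      · have : (fun x => (x, y)) ⁻¹' ((Set.univ ×ˢ S') ∩ D) = ∅ := by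
          ext x; simp [hy, hDdef]
        rw [this, measure_empty, Set.indicator_of_notMem hy]
    rw [lintegral_congr heq, lintegral_indicator hS'meas, setLIntegral_const, hS'vol]
  have hA : (volume.prod volume) A ≤ 2 * (ENNReal.ofReal c * ENNReal.ofReal M) := by
    calc (volume.prod volume) A ≤
        (volume.prod volume) (((S' ×ˢ Set.univ) ∩ D) ∪ ((Set.univ ×ˢ S') ∩ D)) :=
          measure_mono hsub
      _ ≤ (volume.prod volume) ((S' ×ˢ Set.univ) ∩ D) +
          (volume.prod volume) ((Set.univ ×ˢ S') ∩ D) := measure_union_le _ _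
      _ ≤ ENNReal.ofReal c * ENNReal.ofReal M + ENNReal.ofReal c * ENNReal.ofReal M :=
          add_le_add hB1 hB2
      _ = 2 * (ENNReal.ofReal c * ENNReal.ofReal M) := by ring
  have hlc : ENNReal.ofReal (lam ^ p) * ENNReal.ofReal c = ENNReal.ofReal (L ^ p) := by
    rw [← ENNReal.ofReal_mul (Real.rpow_nonneg hlam.le p), hcdef,
      ← Real.mul_rpow hlam.le (by positivity), mul_div_cancel₀ _ hlam.ne']
  calc ENNReal.ofReal (lam ^ p) * (volume.prod volume) A
      ≤ ENNReal.ofReal (lam ^ p) * (2 * (ENNReal.ofReal c * ENNReal.ofReal M)) :=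
        mul_le_mul_right hA _
    _ = 2 * (ENNReal.ofReal (lam ^ p) * ENNReal.ofReal c) * ENNReal.ofReal M := by ring
    _ = 2 * ENNReal.ofReal (L ^ p) * ENNReal.ofReal M := by rw [hlc]
    _ ≤ ENNReal.ofReal (2 * M * L ^ p) := by
        rcases le_or_gt 0 M with hM | hM
        · rw [show (2 : ENNReal) = ENNReal.ofReal 2 by simp,
            ← ENNReal.ofReal_mul (by norm_num), ← ENNReal.ofReal_mul (by positivity)]
          apply ENNReal.ofReal_le_ofReal
          nlinarith [Real.rpow_nonneg hL.le p]
        · rw [ENNReal.ofReal_eq_zero.mpr hM.le, mul_zero]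
          exact zero_le
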